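/- Let r and n be integers with 2 ≤ r ≤ n and r dividing n, and let k ≥ 2. If F_1, F_2, ..., F_k are graphs on a common vertex set of size n, each of which is the vertex-disjoint union of n/r copies of the complete graph K_r, then the simultaneous domination number of F_1, ..., F_k is at most (1 − ((r−1)/r)·(1/k)^{1/(r−1)}) · n, which is at most n(ln(k) + 1)/r. -/

import Mathlib

/-- The simultaneous domination number of factors `F 0, …, F (k-1)` on a common
finite vertex set: the minimum cardinality of a set `S` that is a dominating set
in every factor. -/
noncomputable def simDomNum {V : Type*} [Fintype V] {k : ℕ}
    (F : Fin k → SimpleGraph V) : ℕ :=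
  sInf {m | ∃ S : Finset V, (∀ i, ∀ v ∉ S, ∃ u ∈ S, (F i).Adj v u) ∧ S.card = m}

/-- `G` is the vertex-disjoint union of copies of `K_r`: the vertex set is
partitioned into blocks of size `r`, and two vertices are adjacent iff they are
distinct and lie in a common block. -/
def IsUnionCliques {V : Type*} [Fintype V] [DecidableEq V]
    (G : SimpleGraph V) (r : ℕ) : Prop :=
  ∃ P : Finpartition (Finset.univ : Finset V),
    (∀ b ∈ P.parts, b.card = r) ∧
    ∀ u v : V, G.Adj u v ↔ (u ≠ v ∧ ∃ b ∈ P.parts, u ∈ b ∧ v ∈ b)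


open Finset

lemma binomA {V : Type*} [DecidableEq V] (s : Finset V) (a b : ℝ) :
    ∑ T ∈ s.powerset, a ^ T.card * b ^ (s.card - T.card) = (a + b) ^ s.card := by
  have h := Finset.prod_add (fun _ : V => a) (fun _ => b) s
  simp only [prod_const] at h
  rw [h]
  refine Finset.sum_congr rfl fun T hT => ?_
  rw [card_sdiff_of_subset (mem_powerset.mp hT)]

lemma inclA {V : Type*} [DecidableEq V] {s A : Finset V} (hA : A ⊆ s) (a b : ℝ)
    (hab : a + b = 1) :
    ∑ T ∈ s.powerset.filter (fun T => A ⊆ T), a ^ T.card * b ^ (s.card - T.card)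
      = a ^ A.card := by
  have key : ∑ T ∈ s.powerset.filter (fun T => A ⊆ T), a ^ T.card * b ^ (s.card - T.card)
      = ∑ T' ∈ (s \ A).powerset, a ^ (A.card + T'.card) * b ^ ((s \ A).card - T'.card) := by
    refine Finset.sum_nbij' (fun T => T \ A) (fun T' => T' ∪ A) ?_ ?_ ?_ ?_ ?_
    · intro T hT
      simp only [mem_filter, mem_powerset] at hT
      exact mem_powerset.mpr (sdiff_subset_sdiff hT.1 le_rfl)
    · intro T' hT'
      simp only [mem_powerset] at hT'
      refine mem_filter.mpr ⟨mem_powerset.mpr (union_subset (hT'.trans sdiff_subset) hA), subset_union_right⟩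
    · intro T hT
      simp only [mem_filter, mem_powerset] at hT
      exact sdiff_union_of_subset hT.2
    · intro T' hT'
      simp only [mem_powerset] at hT'
      exact union_sdiff_cancel_right (disjoint_of_subset_left hT' sdiff_disjoint)
    · intro T hT
      simp only [mem_filter, mem_powerset] at hT
      have h1 : (T \ A).card = T.card - A.card := card_sdiff_of_subset hT.2
      have h2 : A.card ≤ T.card := card_le_card hT.2
      have h3 : T.card ≤ s.card := card_le_card hT.1
      have h4 : A.card ≤ s.card := card_le_card hA
      have e1 : A.card + (T.card - A.card) = T.card := by omega
      have e2 : (s.card - A.card) - (T.card - A.card) = s.card - T.card := by omega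
      rw [h1, card_sdiff_of_subset hA, e1, e2]
  rw [key]
  have : ∀ T' ∈ (s \ A).powerset, a ^ (A.card + T'.card) * b ^ ((s \ A).card - T'.card)
      = a ^ A.card * (a ^ T'.card * b ^ ((s \ A).card - T'.card)) := by
    intro T' _; ring
  rw [Finset.sum_congr rfl this, ← Finset.mul_sum, binomA, hab, one_pow, mul_one]


theorem stmt5 {V : Type*} [Fintype V] [DecidableEq V] {r n k : ℕ}
    (hr : 2 ≤ r) (hrn : r ≤ n) (hdvd : r ∣ n) (hn : Fintype.card V = n)
    (hk : 2 ≤ k) (F : Fin k → SimpleGraph V)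
    (hF : ∀ i, IsUnionCliques (F i) r) :
    (simDomNum F : ℝ) ≤
        (1 - (((r : ℝ) - 1) / r) * (1 / (k : ℝ)) ^ ((1 : ℝ) / ((r : ℝ) - 1))) * n ∧
      (1 - (((r : ℝ) - 1) / r) * (1 / (k : ℝ)) ^ ((1 : ℝ) / ((r : ℝ) - 1))) * n ≤
        n * (Real.log k + 1) / r := by
  classical
  have hkpos : (0:ℝ) < k := by exact_mod_cast (by omega : 0 < k)
  have hrpos : (0:ℝ) < r := by exact_mod_cast (by omega : 0 < r)
  have hr1R : (1:ℝ) ≤ (r:ℝ) - 1 := by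
    have : (2:ℝ) ≤ r := by exact_mod_cast hr
    linarith
  have hr1pos : (0:ℝ) < (r:ℝ) - 1 := by linarith
  have hr1cast : ((r - 1 : ℕ) : ℝ) = (r:ℝ) - 1 := by
    have : 1 ≤ r := by omega
    push_cast [this]; ring
  set q : ℝ := (1 / (k:ℝ)) ^ ((1:ℝ) / ((r:ℝ) - 1)) with hq
  have hbase0 : (0:ℝ) < 1 / (k:ℝ) := by positivity
  have hq0 : 0 < q := Real.rpow_pos_of_pos hbase0 _
  have hq1 : q < 1 := by
    apply Real.rpow_lt_one hbase0.le
    · rw [div_lt_one hkpos]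
      exact_mod_cast (by omega : 1 < k)
    · positivity
  have hqpow : q ^ (r - 1) = 1 / (k:ℝ) := by
    have he : (1:ℝ) / ((r:ℝ) - 1) * ((r - 1 : ℕ) : ℝ) = 1 := by
      rw [hr1cast]; field_simp
    rw [hq, ← Real.rpow_natCast ((1 / (k:ℝ)) ^ ((1:ℝ) / ((r:ℝ) - 1))) (r-1),
      ← Real.rpow_mul hbase0.le, he, Real.rpow_one]
  have hqr : q ^ r = (1 / (k:ℝ)) * q := by
    have : r = (r - 1) + 1 := by omega
    rw [this, pow_succ, hqpow]
  -- choose partitions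
  choose P hPcard hPadj using hF
  have hparts : ∀ i, ((P i).parts.card) * r = n := by
    intro i
    have h1 := Finpartition.sum_card_parts (P i)
    rw [Finset.sum_congr rfl (fun b hb => hPcard i b hb)] at h1
    simpa [Finset.sum_const, smul_eq_mul, card_univ, hn] using h1
  have hpartsR : ∀ i, (((P i).parts.card : ℝ)) = n / r := by
    intro i
    have := hparts i
    field_simp
    exact_mod_cast this
  -- weights
  set N : ℕ := (univ : Finset V).card with hN
  have hNn : N = n := by rw [hN, card_univ, hn]
  set w : Finset V → ℝ := fun T => q ^ T.card * (1 - q) ^ (N - T.card) with hw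
  have hwpos : ∀ T : Finset V, 0 < w T := by
    intro T
    have : (0:ℝ) < 1 - q := by linarith
    positivity
  have hsum1 : ∑ T ∈ (univ : Finset V).powerset, w T = 1 := by
    rw [hw]
    simpa [hN] using binomA (univ : Finset V) q (1-q)
  have hincl : ∀ A : Finset V, ∑ T ∈ (univ : Finset V).powerset.filter (fun T => A ⊆ T), w T
      = q ^ A.card := by
    intro A
    rw [hw]
    simpa [hN] using inclA (subset_univ A) q (1-q) (by ring)
  -- indicator lemma
  have hind : ∀ A : Finset V, ∑ T ∈ (univ : Finset V).powerset,
      (if A ⊆ T then w T else 0) = q ^ A.card := by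
    intro A
    rw [Finset.sum_ite, Finset.sum_const_zero, add_zero, hincl A]
  -- expectation of card
  have E2 : ∑ T ∈ (univ : Finset V).powerset, w T * (T.card : ℝ) = N * q := by
    have hcardT : ∀ T : Finset V, (T.card : ℝ) = ∑ v ∈ (univ : Finset V),
        (if ({v} : Finset V) ⊆ T then (1:ℝ) else 0) := by
      intro T
      simp [Finset.singleton_subset_iff, Finset.sum_ite_mem]
    calc ∑ T ∈ (univ : Finset V).powerset, w T * (T.card : ℝ)
        = ∑ T ∈ (univ : Finset V).powerset, ∑ v ∈ (univ : Finset V),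
            (if ({v} : Finset V) ⊆ T then w T else 0) := by
          refine Finset.sum_congr rfl fun T _ => ?_
          rw [hcardT T, Finset.mul_sum]
          refine Finset.sum_congr rfl fun v _ => ?_
          split <;> simp
      _ = ∑ v ∈ (univ : Finset V), ∑ T ∈ (univ : Finset V).powerset,
            (if ({v} : Finset V) ⊆ T then w T else 0) := Finset.sum_comm
      _ = ∑ v ∈ (univ : Finset V), q ^ (({v} : Finset V).card) := by
          refine Finset.sum_congr rfl fun v _ => hind _
      _ = N * q := by simp [hN, pow_one, mul_comm]
  -- expectation of block counts
  have E3 : ∀ i : Fin k, ∑ T ∈ (univ : Finset V).powerset,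
      w T * (((P i).parts.filter (fun b => b ⊆ T)).card : ℝ)
      = ((P i).parts.card : ℝ) * q ^ r := by
    intro i
    have hcnt : ∀ T : Finset V, ((((P i).parts.filter (fun b => b ⊆ T)).card : ℝ))
        = ∑ b ∈ (P i).parts, (if b ⊆ T then (1:ℝ) else 0) := by
      intro T
      rw [Finset.sum_ite, Finset.sum_const_zero, add_zero, Finset.sum_const]
      simp
    calc ∑ T ∈ (univ : Finset V).powerset,
          w T * (((P i).parts.filter (fun b => b ⊆ T)).card : ℝ)
        = ∑ T ∈ (univ : Finset V).powerset, ∑ b ∈ (P i).parts,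
            (if b ⊆ T then w T else 0) := by
          refine Finset.sum_congr rfl fun T _ => ?_
          rw [hcnt T, Finset.mul_sum]
          refine Finset.sum_congr rfl fun b _ => ?_
          split <;> simp
      _ = ∑ b ∈ (P i).parts, ∑ T ∈ (univ : Finset V).powerset,
            (if b ⊆ T then w T else 0) := Finset.sum_comm
      _ = ∑ b ∈ (P i).parts, q ^ b.card := Finset.sum_congr rfl fun b _ => hind b
      _ = ((P i).parts.card : ℝ) * q ^ r := by
          rw [Finset.sum_congr rfl (fun b hb => by rw [hPcard i b hb]), Finset.sum_const]
          simp [mul_comm]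
  -- the objective function
  set f : Finset V → ℝ := fun T => ((N : ℝ) - T.card)
      + ∑ i : Fin k, (((P i).parts.filter (fun b => b ⊆ T)).card : ℝ) with hf
  have Etot : ∑ T ∈ (univ : Finset V).powerset, w T * f T
      = ((N:ℝ) - N * q) + (n / r) * q := by
    have expand : ∀ T : Finset V, w T * f T
        = w T * ((N:ℝ) - T.card)
          + ∑ i : Fin k, w T * (((P i).parts.filter (fun b => b ⊆ T)).card : ℝ) := by
      intro T
      simp only [hf]
      rw [mul_add, Finset.mul_sum]
    have A1 : ∑ T ∈ (univ : Finset V).powerset, w T * ((N:ℝ) - T.card)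
        = (N:ℝ) - (N:ℝ) * q := by
      have h1 : ∀ T ∈ (univ : Finset V).powerset,
          w T * ((N:ℝ) - T.card) = (N:ℝ) * w T - w T * T.card := fun T _ => by ring
      rw [Finset.sum_congr rfl h1, Finset.sum_sub_distrib, ← Finset.mul_sum, hsum1, E2,
        mul_one]
    have A2 : ∑ T ∈ (univ : Finset V).powerset,
        ∑ i : Fin k, w T * (((P i).parts.filter (fun b => b ⊆ T)).card : ℝ)
        = ((n:ℝ) / r) * q := by
      rw [Finset.sum_comm]
      rw [Finset.sum_congr rfl (fun i _ => E3 i)]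
      rw [Finset.sum_congr rfl (fun (i : Fin k) _ => by rw [hpartsR i, hqr]),
        Finset.sum_const]
      simp only [smul_eq_mul, card_univ, Fintype.card_fin]
      have hk0 : (k:ℝ) ≠ 0 := ne_of_gt hkpos
      have hr0 : (r:ℝ) ≠ 0 := ne_of_gt hrpos
      field_simp
      calc _ = (n:ℝ) * q * ((r:ℝ) * (r:ℝ)⁻¹) * ((k:ℝ) * (k:ℝ)⁻¹) := by ring
        _ = _ := by rw [mul_inv_cancel₀ hr0, mul_inv_cancel₀ hk0]; ring
    rw [Finset.sum_congr rfl (fun T _ => expand T), Finset.sum_add_distrib, A1, A2]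
  -- there is a good T
  have hEbound : ∃ T ∈ (univ : Finset V).powerset,
      f T ≤ ((N:ℝ) - N * q) + (n / r) * q := by
    by_contra hcon
    push_neg at hcon
    have : ∑ T ∈ (univ : Finset V).powerset, w T * (((N:ℝ) - N * q) + (n / r) * q)
        < ∑ T ∈ (univ : Finset V).powerset, w T * f T := by
      apply Finset.sum_lt_sum_of_nonempty
      · exact ⟨∅, Finset.mem_powerset.mpr (empty_subset _)⟩
      · intro T hT
        exact (mul_lt_mul_iff_right₀ (hwpos T)).mpr (hcon T hT)
    rw [Etot, ← Finset.sum_mul, hsum1, one_mul] at this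
    exact lt_irrefl _ this
  obtain ⟨T, hTmem, hTle⟩ := hEbound
  -- construct the SD-set
  have hVne : Nonempty V := Fintype.card_pos_iff.mp (by rw [hn]; omega)
  set pickv : Finset V → V := fun b => if h : b.Nonempty then h.choose else Classical.arbitrary V
    with hpickv
  have hpickmem : ∀ b : Finset V, b.Nonempty → pickv b ∈ b := by
    intro b h
    simp only [hpickv, dif_pos h]
    exact h.choose_spec
  set pick : Finset V → Finset V := fun b => {pickv b} with hpick
  set S : Finset V := (univ \ T) ∪ (Finset.univ : Finset (Fin k)).biUnion
      (fun i => (((P i).parts.filter (fun b => b ⊆ T)).biUnion pick)) with hS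
  have hdom : ∀ i, ∀ v ∉ S, ∃ u ∈ S, (F i).Adj v u := by
    intro i v hv
    have hvT : v ∈ T := by
      by_contra h
      exact hv (Finset.mem_union_left _ (Finset.mem_sdiff.mpr ⟨mem_univ v, h⟩))
    obtain ⟨b, hb, hvb⟩ := (P i).exists_mem (Finset.mem_univ v)
    by_cases hbT : b ⊆ T
    · have hbne : b.Nonempty := ⟨v, hvb⟩
      have hbmem : b ∈ (P i).parts.filter (fun b => b ⊆ T) := Finset.mem_filter.mpr ⟨hb, hbT⟩
      have hxpick : pickv b ∈ pick b := by simp [hpick]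
      have hxS : pickv b ∈ S := by
        refine Finset.mem_union_right _ (Finset.mem_biUnion.mpr
          ⟨i, mem_univ i, Finset.mem_biUnion.mpr ⟨b, hbmem, hxpick⟩⟩)
      refine ⟨pickv b, hxS, ?_⟩
      rw [hPadj i]
      refine ⟨?_, b, hb, hvb, hpickmem b hbne⟩
      intro h
      exact hv (h ▸ hxS)
    · obtain ⟨u, hub, huT⟩ := Finset.not_subset.mp hbT
      refine ⟨u, Finset.mem_union_left _ (Finset.mem_sdiff.mpr ⟨mem_univ u, huT⟩), ?_⟩
      rw [hPadj i]
      exact ⟨fun h => huT (h ▸ hvT), b, hb, hvb, hub⟩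
  -- cardinality bound
  have hScard : (S.card : ℝ) ≤ f T := by
    have h1 : S.card ≤ (univ \ T).card
        + ∑ i : Fin k, (((P i).parts.filter (fun b => b ⊆ T)).card) := by
      refine le_trans (Finset.card_union_le _ _) ?_
      gcongr
      refine le_trans (Finset.card_biUnion_le) ?_
      refine Finset.sum_le_sum fun i _ => ?_
      refine le_trans (Finset.card_biUnion_le) ?_
      calc ∑ b ∈ ((P i).parts.filter (fun b => b ⊆ T)), (pick b).card
          ≤ ∑ b ∈ ((P i).parts.filter (fun b => b ⊆ T)), 1 := by
            refine Finset.sum_le_sum fun b _ => ?_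
            simp [hpick]
        _ = _ := by simp
    have h2 : ((univ \ T).card : ℝ) = (N : ℝ) - T.card := by
      rw [Finset.card_sdiff_of_subset (subset_univ T), hN]
      have : T.card ≤ (univ : Finset V).card := Finset.card_le_card (subset_univ T)
      push_cast [this]
      ring
    calc (S.card : ℝ) ≤ ((univ \ T).card : ℝ)
          + ∑ i : Fin k, (((P i).parts.filter (fun b => b ⊆ T)).card : ℝ) := by
          exact_mod_cast h1
      _ = f T := by rw [h2]
  -- simDomNum bound
  have hsd : (simDomNum F : ℝ) ≤ (S.card : ℝ) := by
    have : simDomNum F ≤ S.card := Nat.sInf_le ⟨S, hdom, rfl⟩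
    exact_mod_cast this
  have main : (simDomNum F : ℝ) ≤
      (1 - (((r : ℝ) - 1) / r) * q) * n := by
    have hEeq : ((N:ℝ) - N * q) + (n / r) * q = (1 - (((r : ℝ) - 1) / r) * q) * n := by
      rw [hNn]
      field_simp
      ring
    calc (simDomNum F : ℝ) ≤ (S.card : ℝ) := hsd
      _ ≤ f T := hScard
      _ ≤ ((N:ℝ) - N * q) + (n / r) * q := hTle
      _ = _ := hEeq
  refine ⟨main, ?_⟩
  -- second inequality
  have hqexp : q = Real.exp (-(Real.log k) / ((r:ℝ) - 1)) := by
    rw [hq, Real.rpow_def_of_pos hbase0, one_div, Real.log_inv]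
    congr 1
    field_simp
  have hx0 : 0 ≤ Real.log k / ((r:ℝ) - 1) := by
    have : (0:ℝ) ≤ Real.log k := Real.log_nonneg (by exact_mod_cast (by omega : 1 ≤ k))
    positivity
  have hkey : ((r:ℝ) - 1) * (1 - q) ≤ Real.log k := by
    have h1 : 1 - q ≤ Real.log k / ((r:ℝ) - 1) := by
      rw [hqexp]
      have := Real.add_one_le_exp (-(Real.log k / ((r:ℝ) - 1)))
      have heq : -(Real.log k) / ((r:ℝ) - 1) = -(Real.log k / ((r:ℝ) - 1)) := by ring
      rw [heq]
      linarith
    calc ((r:ℝ) - 1) * (1 - q) ≤ ((r:ℝ) - 1) * (Real.log k / ((r:ℝ) - 1)) := by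
          exact mul_le_mul_of_nonneg_left h1 (le_of_lt hr1pos)
      _ = Real.log k := by field_simp
  have hn0 : (0:ℝ) ≤ n := by positivity
  rw [le_div_iff₀ hrpos]
  have hlhs : (1 - (((r : ℝ) - 1) / r) * q) * n * r = n * ((r:ℝ) - ((r:ℝ)-1) * q) := by
    field_simp
  rw [hlhs]
  apply mul_le_mul_of_nonneg_left _ hn0
  nlinarith [hkey]
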